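/- arXiv:2201.05637 — 4 statements merged into one kernel-verified Lean document; each statement's English description precedes it below -/
import Mathlib

section
/- Let G = H × K where H is a nontrivial finite p-group and p divides |K|. If k ∈ K generates a maximal cyclic subgroup of K whose order is divisible by p, then ⟨(1,k)⟩ is a maximal cyclic subgroup of G. -/
/-- A subgroup is maximal cyclic if it is cyclic and not properly contained
in any cyclic subgroup. -/
def IsMaximalCyclic {G : Type*} [Group G] (C : Subgroup G) : Prop :=
  IsCyclic C ∧ ∀ D : Subgroup G, IsCyclic D → C ≤ D → C = D

/-- η(G): the number of conjugacy classes of maximal cyclic subgroups of `G`. -/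
noncomputable def eta (G : Type*) [Group G] : ℕ :=
  Nat.card (Quot (fun C D : {C : Subgroup G // IsMaximalCyclic C} =>
    ∃ g : G, D.1 = C.1.map (MulAut.conj g).toMonoidHom))

/-- The set of elements generating a non-maximal cyclic subgroup. -/
def Gminus (G : Type*) [Group G] : Set G :=
  {g : G | ¬ IsMaximalCyclic (Subgroup.zpowers g)}

/-- `C` is a maximal cyclic subgroup of `N` (all inside an ambient group). -/
def IsMaximalCyclicIn {G : Type*} [Group G] (N C : Subgroup G) : Prop :=
  C ≤ N ∧ IsCyclic C ∧ ∀ D : Subgroup G, D ≤ N → IsCyclic D → C ≤ D → C = D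



lemma zpowers_isCyclic' {G : Type*} [Group G] (x : G) :
    IsCyclic (Subgroup.zpowers x) := by
  refine ⟨⟨⟨x, Subgroup.mem_zpowers x⟩, ?_⟩⟩
  rintro ⟨y, n, rfl⟩
  exact ⟨n, by ext; simp⟩

theorem stmt_4 {H K : Type*} [Group H] [Group K] [Finite H] [Finite K]
    {p : ℕ} (hp : p.Prime) (hH : IsPGroup p H) (hHnt : Nontrivial H)
    (hpK : p ∣ Nat.card K) (k : K)
    (hk : IsMaximalCyclic (Subgroup.zpowers k)) (hpk : p ∣ orderOf k) :
    IsMaximalCyclic (Subgroup.zpowers ((1, k) : H × K)) := by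
  constructor
  · exact zpowers_isCyclic' _
  intro D hD hle
  obtain ⟨⟨g, hgD⟩, hgen⟩ := hD.exists_generator
  have hDg : D = Subgroup.zpowers g := by
    apply le_antisymm
    · intro x hx
      obtain ⟨n, hn⟩ := hgen ⟨x, hx⟩
      exact ⟨n, by simpa using congrArg Subtype.val hn⟩
    · exact Subgroup.zpowers_le.mpr hgD
  have hmem : ((1, k) : H × K) ∈ Subgroup.zpowers g := by
    rw [← hDg]; exact hle (Subgroup.mem_zpowers _)
  obtain ⟨n, hn⟩ := hmem
  have hn' : g ^ n = (1, k) := hn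
  have hn1 : g.1 ^ n = 1 := congrArg Prod.fst hn'
  have hn2 : g.2 ^ n = k := congrArg Prod.snd hn'
  have hzk : Subgroup.zpowers k = Subgroup.zpowers g.2 :=
    hk.2 _ (zpowers_isCyclic' _) (Subgroup.zpowers_le.mpr ⟨n, hn2⟩)
  have hord : orderOf k = orderOf g.2 := by
    rw [← Nat.card_zpowers, ← Nat.card_zpowers, hzk]
  have hpn : ¬ ((p : ℤ) ∣ n) := by
    rintro ⟨m, hm⟩
    have hkmem : k ∈ Subgroup.zpowers (g.2 ^ p) := by
      refine ⟨m, ?_⟩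
      show (g.2 ^ p) ^ m = k
      rw [← zpow_natCast, ← zpow_mul, ← hm, hn2]
    have hdvd : orderOf k ∣ orderOf (g.2 ^ p) := orderOf_dvd_of_mem_zpowers hkmem
    have hpg2 : p ∣ orderOf g.2 := hord ▸ hpk
    have hopow : orderOf (g.2 ^ p) = orderOf g.2 / p := by
      rw [orderOf_pow, Nat.gcd_eq_right hpg2]
    have h1 : orderOf g.2 ∣ orderOf g.2 / p := by
      rw [hopow, hord] at hdvd; exact hdvd
    have hpos : 0 < orderOf g.2 := orderOf_pos g.2
    have hd0 : 0 < orderOf g.2 / p := Nat.div_pos (Nat.le_of_dvd hpos hpg2) hp.pos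
    have h2 := Nat.le_of_dvd hd0 h1
    have h3 := Nat.div_lt_self hpos hp.one_lt
    omega
  have hg1 : g.1 = 1 := by
    by_contra hne
    have : Fact p.Prime := ⟨hp⟩
    obtain ⟨s, hs⟩ := IsPGroup.iff_orderOf.mp hH g.1
    have hone : orderOf g.1 ≠ 1 := by
      simpa [orderOf_eq_one_iff] using hne
    have hs0 : s ≠ 0 := by
      rintro rfl; rw [pow_zero] at hs; exact hone hs
    have hpdvd : p ∣ orderOf g.1 := hs ▸ dvd_pow_self p hs0
    have : (orderOf g.1 : ℤ) ∣ n := orderOf_dvd_iff_zpow_eq_one.mpr hn1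
    exact hpn (dvd_trans (Int.natCast_dvd_natCast.mpr hpdvd) this)
  have hg2 : g.2 ∈ Subgroup.zpowers k := hzk ▸ Subgroup.mem_zpowers g.2
  obtain ⟨m, hm⟩ := hg2
  have hm' : k ^ m = g.2 := hm
  have hgmem : g ∈ Subgroup.zpowers ((1, k) : H × K) := by
    refine ⟨m, ?_⟩
    show ((1, k) : H × K) ^ m = g
    have h1 : (((1, k) : H × K) ^ m).1 = g.1 := by simp [hg1]
    have h2 : (((1, k) : H × K) ^ m).2 = g.2 := by simp [hm']
    exact Prod.ext h1 h2
  rw [hDg]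
  exact le_antisymm (hDg ▸ hle) (Subgroup.zpowers_le.mpr hgmem)
end

section
/- If H and K are nontrivial finite p-groups for the same prime p and G = H × K, then η(G) ≥ η(H)·η(K) + η(H) + η(K). -/
open Subgroup

section Aux

variable {G G' : Type*} [Group G] [Group G']

lemma isCyclic_zpowers (g : G) : IsCyclic (zpowers g) := by
  refine ⟨⟨⟨g, mem_zpowers g⟩, ?_⟩⟩
  rintro ⟨x, n, rfl⟩
  exact ⟨n, by ext; simp⟩

lemma exists_zpowers_eq (D : Subgroup G) (hD : IsCyclic D) : ∃ g : G, D = zpowers g := by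
  obtain ⟨⟨g, hg⟩, hgen⟩ := hD.exists_generator
  refine ⟨g, le_antisymm ?_ (zpowers_le.mpr hg)⟩
  intro x hx
  obtain ⟨n, hn⟩ := hgen ⟨x, hx⟩
  exact ⟨n, by simpa [Subtype.ext_iff] using hn⟩

lemma isCyclic_map (f : G →* G') (C : Subgroup G) (hC : IsCyclic C) : IsCyclic (C.map f) := by
  obtain ⟨g, rfl⟩ := exists_zpowers_eq C hC
  rw [MonoidHom.map_zpowers]
  exact _root_.isCyclic_zpowers _

lemma IsMaximalCyclic.map (e : G ≃* G') {C : Subgroup G} (hC : IsMaximalCyclic C) :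
    IsMaximalCyclic (C.map e.toMonoidHom) := by
  refine ⟨isCyclic_map _ _ hC.1, fun D hD hle => ?_⟩
  have h1 : C ≤ D.map e.symm.toMonoidHom := by
    intro x hx
    exact ⟨e x, hle (Subgroup.mem_map_of_mem _ hx), e.symm_apply_apply x⟩
  have h2 : C = D.map e.symm.toMonoidHom := hC.2 _ (isCyclic_map _ _ hD) h1
  rw [h2, Subgroup.map_map]
  convert Subgroup.map_id D
  ext x; simp

lemma isMaximalCyclic_map_iff (e : G ≃* G') (C : Subgroup G) :
    IsMaximalCyclic (C.map e.toMonoidHom) ↔ IsMaximalCyclic C := by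
  constructor
  · intro h
    have := h.map e.symm
    rwa [Subgroup.map_map, show e.symm.toMonoidHom.comp e.toMonoidHom = MonoidHom.id G by ext; simp,
      Subgroup.map_id] at this
  · exact fun h => h.map e

lemma not_isMaximalCyclic_bot [Nontrivial G] : ¬ IsMaximalCyclic (⊥ : Subgroup G) := by
  rintro ⟨-, hmax⟩
  obtain ⟨g, hg⟩ := exists_ne (1 : G)
  have h := hmax (zpowers g) (_root_.isCyclic_zpowers g) bot_le
  have : g ∈ (⊥ : Subgroup G) := h ▸ mem_zpowers g
  exact hg (by simpa using this)

lemma ne_one_of_isMaximalCyclic [Nontrivial G] {h : G}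
    (hmax : IsMaximalCyclic (zpowers h)) : h ≠ 1 := by
  rintro rfl
  rw [zpowers_one_eq_bot] at hmax
  exact not_isMaximalCyclic_bot hmax

lemma mem_zpowers_pow_of_coprime [Finite G] {x : G} {n : ℕ}
    (h : Nat.Coprime n (orderOf x)) : x ∈ zpowers (x ^ n) := by
  set e := orderOf x with he
  have hepos : 0 < e := orderOf_pos x
  have ht : 0 < e.totient := Nat.totient_pos.mpr hepos
  set m := n ^ (e.totient - 1) with hm
  have hmod : n * m ≡ 1 [MOD e] := by
    have : n * m = n ^ e.totient := by
      rw [hm, ← pow_succ']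
      congr 1
      omega
    rw [this]
    exact Nat.ModEq.pow_totient h
  have : (x ^ n) ^ m = x := by
    rw [← pow_mul, pow_eq_pow_iff_modEq.mpr hmod, pow_one]
  exact mem_zpowers_iff.mpr ⟨(m : ℤ), by rw [zpow_natCast]; exact this⟩

lemma orderOf_isPGroup {p : ℕ} (hp : p.Prime) (hG : IsPGroup p G) (g : G) :
    ∃ t, orderOf g = p ^ t := by
  have : Fact p.Prime := ⟨hp⟩
  exact IsPGroup.iff_orderOf.mp hG g

end Aux

section Core

variable {H K : Type*} [Group H] [Group K] [Finite H] [Finite K] {p : ℕ}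

/-- Core lemma: if `⟨h⟩` is maximal cyclic in the `p`-group `H` with `h ≠ 1`, then
`⟨(h,k)⟩` is maximal cyclic in `H × K` for any `k`. -/
lemma isMaximalCyclic_prod (hp : p.Prime) (hH : IsPGroup p H) (hK : IsPGroup p K)
    {h : H} (hh : h ≠ 1) (hmax : IsMaximalCyclic (zpowers h)) (k : K) :
    IsMaximalCyclic (zpowers (h, k)) := by
  refine ⟨_root_.isCyclic_zpowers _, fun D hD hle => ?_⟩
  obtain ⟨⟨a, b⟩, rfl⟩ := exists_zpowers_eq D hD
  have hmemz : (h, k) ∈ zpowers (a, b) := hle (mem_zpowers _)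
  obtain ⟨n, hn⟩ : ∃ n : ℕ, (a, b) ^ n = (h, k) :=
    mem_powers_iff_mem_zpowers.mpr hmemz
  have ha : a ^ n = h := congrArg Prod.fst hn
  have hb : b ^ n = k := congrArg Prod.snd hn
  -- zpowers h = zpowers a by maximality
  have h1 : zpowers h = zpowers a :=
    hmax.2 _ (_root_.isCyclic_zpowers a) (zpowers_le.mpr (ha ▸ pow_mem (mem_zpowers a) n))
  have horda : orderOf a = orderOf h := by
    rw [← Nat.card_zpowers, ← Nat.card_zpowers, h1]
  -- gcd(n, orderOf h) = 1
  have hgcd : Nat.gcd (orderOf h) n = 1 := by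
    have h2 : orderOf (a ^ n) = orderOf a / Nat.gcd (orderOf a) n := orderOf_pow a
    rw [ha, horda] at h2
    have hpos : 0 < orderOf h := orderOf_pos h
    have hdvd : Nat.gcd (orderOf h) n ∣ orderOf h := Nat.gcd_dvd_left _ _
    rcases (Nat.div_eq_self.mp h2.symm) with h3 | h3
    · omega
    · exact h3
  -- p does not divide n
  have hpn : ¬ p ∣ n := by
    obtain ⟨s, hs⟩ := orderOf_isPGroup hp hH h
    have hs1 : 1 ≤ s := by
      rcases Nat.eq_zero_or_pos s with rfl | h'
      · exfalso; exact hh (orderOf_eq_one_iff.mp (by simpa using hs))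
      · exact h'
    intro hdvd
    have : p ∣ Nat.gcd (orderOf h) n :=
      Nat.dvd_gcd (hs ▸ dvd_pow_self p (by omega)) hdvd
    rw [hgcd] at this
    exact hp.ne_one (Nat.dvd_one.mp this)
  have hcopr : ∀ g : K, Nat.Coprime n (orderOf g) := by
    intro g
    obtain ⟨t, ht⟩ := orderOf_isPGroup hp hK g
    rw [ht]
    exact Nat.Coprime.pow_right _ ((Nat.Prime.coprime_iff_not_dvd hp).mpr hpn).symm
  have hcoprH : ∀ g : H, Nat.Coprime n (orderOf g) := by
    intro g
    obtain ⟨t, ht⟩ := orderOf_isPGroup hp hH g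
    rw [ht]
    exact Nat.Coprime.pow_right _ ((Nat.Prime.coprime_iff_not_dvd hp).mpr hpn).symm
  have hcoprod : Nat.Coprime n (orderOf (a, b)) := by
    rw [Prod.orderOf_mk]
    exact Nat.Coprime.coprime_dvd_right (Nat.lcm_dvd (dvd_mul_right _ _) (dvd_mul_left _ _))
      ((hcoprH a).mul_right (hcopr b))
  have hmem2 : (a, b) ∈ zpowers (h, k) := by
    rw [← hn]
    exact mem_zpowers_pow_of_coprime hcoprod
  exact le_antisymm hle (zpowers_le.mpr hmem2)

end Core


section Machinery

variable (G : Type*) [Group G]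

/-- The subtype of maximal cyclic subgroups. -/
abbrev MaxCyc := {C : Subgroup G // IsMaximalCyclic C}

/-- Conjugacy relation on maximal cyclic subgroups. -/
def crel : MaxCyc G → MaxCyc G → Prop :=
  fun C D => ∃ g : G, D.1 = C.1.map (MulAut.conj g).toMonoidHom

lemma eta_def : eta G = Nat.card (Quot (crel G)) := rfl

open Classical in
/-- Tag a subgroup with its conjugacy class if it is maximal cyclic. -/
noncomputable def fopt (C : Subgroup G) : Option (Quot (crel G)) :=
  if h : IsMaximalCyclic C then some (Quot.mk _ ⟨C, h⟩) else none

variable {G}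

lemma fopt_conj (x : G) (C : Subgroup G) :
    fopt G (C.map (MulAut.conj x).toMonoidHom) = fopt G C := by
  by_cases h : IsMaximalCyclic C
  · rw [fopt, dif_pos (h.map (MulAut.conj x)), fopt, dif_pos h]
    exact congrArg some (Quot.sound ⟨x, rfl⟩).symm
  · rw [fopt, dif_neg (fun h' => h ((isMaximalCyclic_map_iff _ _).mp h')), fopt, dif_neg h]

lemma fopt_bot [Nontrivial G] : fopt G ⊥ = none := by
  rw [fopt, dif_neg not_isMaximalCyclic_bot]

/-- A chosen generator for (the chosen representative of) a conjugacy class. -/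
noncomputable def genOf (q : Quot (crel G)) : G :=
  Classical.choose (exists_zpowers_eq q.out.1 q.out.2.1)

lemma zpowers_genOf (q : Quot (crel G)) : zpowers (genOf q) = q.out.1 :=
  (Classical.choose_spec (exists_zpowers_eq q.out.1 q.out.2.1)).symm

lemma isMaximalCyclic_genOf (q : Quot (crel G)) : IsMaximalCyclic (zpowers (genOf q)) := by
  rw [zpowers_genOf]; exact q.out.2

lemma fopt_zpowers_genOf (q : Quot (crel G)) : fopt G (zpowers (genOf q)) = some q := by
  rw [fopt, dif_pos (isMaximalCyclic_genOf q)]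
  refine congrArg some ?_
  have h : (⟨zpowers (genOf q), isMaximalCyclic_genOf q⟩ : MaxCyc G) = q.out :=
    Subtype.ext (zpowers_genOf q)
  rw [h, Quot.out_eq]

end Machinery

section Proj

variable {H K : Type*} [Group H] [Group K]

lemma proj_fst_conj (E : Subgroup (H × K)) (x : H) (y : K) :
    (E.map (MulAut.conj (x, y)).toMonoidHom).map (MonoidHom.fst H K)
      = (E.map (MonoidHom.fst H K)).map (MulAut.conj x).toMonoidHom := by
  rw [Subgroup.map_map, Subgroup.map_map]
  congr 1

lemma proj_snd_conj (E : Subgroup (H × K)) (x : H) (y : K) :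
    (E.map (MulAut.conj (x, y)).toMonoidHom).map (MonoidHom.snd H K)
      = (E.map (MonoidHom.snd H K)).map (MulAut.conj y).toMonoidHom := by
  rw [Subgroup.map_map, Subgroup.map_map]
  congr 1

/-- The projection invariant of a conjugacy class of subgroups of a product. -/
noncomputable def Phi (H K : Type*) [Group H] [Group K] :
    Quot (crel (H × K)) → Option (Quot (crel H)) × Option (Quot (crel K)) :=
  Quot.lift
    (fun E => (fopt H (E.1.map (MonoidHom.fst H K)), fopt K (E.1.map (MonoidHom.snd H K))))
    (by
      rintro E E' ⟨⟨x, y⟩, hg⟩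
      show (_, _) = (_, _)
      rw [hg, proj_fst_conj, proj_snd_conj, fopt_conj, fopt_conj])

lemma Phi_mk (E : Subgroup (H × K)) (h : IsMaximalCyclic E) :
    Phi H K (Quot.mk _ ⟨E, h⟩)
      = (fopt H (E.map (MonoidHom.fst H K)), fopt K (E.map (MonoidHom.snd H K))) := rfl

lemma isMaximalCyclic_prod' [Finite H] [Finite K] {p : ℕ} (hp : p.Prime)
    (hH : IsPGroup p H) (hK : IsPGroup p K) {k : K} (hk : k ≠ 1)
    (hmax : IsMaximalCyclic (zpowers k)) (h : H) :
    IsMaximalCyclic (zpowers (h, k)) := by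
  have h2 := (isMaximalCyclic_prod hp hK hH hk hmax h).map (MulEquiv.prodComm : K × H ≃* H × K)
  rwa [MonoidHom.map_zpowers] at h2

end Proj

theorem stmt_6 {H K : Type*} [Group H] [Group K] [Finite H] [Finite K]
    {p : ℕ} (hp : p.Prime) (hH : IsPGroup p H) (hK : IsPGroup p K)
    (hHnt : Nontrivial H) (hKnt : Nontrivial K) :
    eta H * eta K + eta H + eta K ≤ eta (H × K) := by
  classical
  have finH : Finite (Quot (crel H)) := Finite.of_surjective _ Quot.mk_surjective
  have finK : Finite (Quot (crel K)) := Finite.of_surjective _ Quot.mk_surjective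
  have finHK : Finite (Quot (crel (H × K))) := Finite.of_surjective _ Quot.mk_surjective
  have pf1 : ∀ (q1 : Quot (crel H)) (q2 : Quot (crel K)),
      IsMaximalCyclic (zpowers (genOf q1, genOf q2)) := fun q1 q2 =>
    isMaximalCyclic_prod hp hH hK
      (ne_one_of_isMaximalCyclic (isMaximalCyclic_genOf q1)) (isMaximalCyclic_genOf q1) _
  have pf2 : ∀ q : Quot (crel H), IsMaximalCyclic (zpowers (genOf q, (1 : K))) := fun q =>
    isMaximalCyclic_prod hp hH hK
      (ne_one_of_isMaximalCyclic (isMaximalCyclic_genOf q)) (isMaximalCyclic_genOf q) _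
  have pf3 : ∀ q : Quot (crel K), IsMaximalCyclic (zpowers ((1 : H), genOf q)) := fun q =>
    isMaximalCyclic_prod' hp hH hK
      (ne_one_of_isMaximalCyclic (isMaximalCyclic_genOf q)) (isMaximalCyclic_genOf q) _
  let σ : (Quot (crel H) × Quot (crel K)) ⊕ (Quot (crel H) ⊕ Quot (crel K)) →
      Quot (crel (H × K)) := fun s =>
    match s with
    | .inl (q1, q2) => Quot.mk _ ⟨zpowers (genOf q1, genOf q2), pf1 q1 q2⟩
    | .inr (.inl q) => Quot.mk _ ⟨zpowers (genOf q, (1 : K)), pf2 q⟩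
    | .inr (.inr q) => Quot.mk _ ⟨zpowers ((1 : H), genOf q), pf3 q⟩
  have hcompute : ∀ s, Phi H K (σ s) =
      (match s with
        | .inl (q1, q2) => (some q1, some q2)
        | .inr (.inl q) => (some q, none)
        | .inr (.inr q) => (none, some q)) := by
    rintro ((⟨q1, q2⟩ : _ × _) | (q | q)) <;>
      simp only [σ, Phi_mk, MonoidHom.map_zpowers, MonoidHom.coe_fst, MonoidHom.coe_snd,
        zpowers_one_eq_bot, fopt_zpowers_genOf, fopt_bot]
  have hinj : Function.Injective σ := by
    intro s t hst
    have h2 := (hcompute s).symm.trans ((congrArg (Phi H K) hst).trans (hcompute t))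
    rcases s with ⟨q1, q2⟩ | q | q <;> rcases t with ⟨r1, r2⟩ | r | r <;>
      simp_all
  calc eta H * eta K + eta H + eta K
      = Nat.card (Quot (crel H)) * Nat.card (Quot (crel K)) + Nat.card (Quot (crel H))
          + Nat.card (Quot (crel K)) := rfl
    _ = Nat.card ((Quot (crel H) × Quot (crel K)) ⊕ (Quot (crel H) ⊕ Quot (crel K))) := by
        rw [Nat.card_sum, Nat.card_sum, Nat.card_prod]; ring
    _ ≤ Nat.card (Quot (crel (H × K))) := Nat.card_le_card_of_injective σ hinj
    _ = eta (H × K) := rfl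
end

section
/- If N is a normal subgroup of a finite group G of index k, then η(G) ≥ η(N)/k. -/
section Aux

variable {G : Type*} [Group G]

lemma map_conj_map_conj (C : Subgroup G) (g h : G) :
    (C.map (MulAut.conj h).toMonoidHom).map (MulAut.conj g).toMonoidHom
      = C.map (MulAut.conj (g * h)).toMonoidHom := by
  rw [Subgroup.map_map]
  congr 1
  ext x
  simp [mul_assoc]

lemma map_conj_one (C : Subgroup G) :
    C.map (MulAut.conj (1 : G)).toMonoidHom = C := by
  ext x; simp

lemma map_conj_inv_cancel {C D : Subgroup G} {g : G}
    (h : D = C.map (MulAut.conj g).toMonoidHom) :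
    C = D.map (MulAut.conj g⁻¹).toMonoidHom := by
  rw [h, map_conj_map_conj, inv_mul_cancel, map_conj_one]

lemma isCyclic_map_iff {H : Type*} [Group H] (f : G →* H) (hf : Function.Injective f)
    (C : Subgroup G) : IsCyclic (C.map f) ↔ IsCyclic C := by
  constructor <;> intro h
  · exact isCyclic_of_surjective _ (C.equivMapOfInjective f hf).symm.surjective
  · exact isCyclic_of_surjective _ (C.equivMapOfInjective f hf).surjective

lemma isCyclic_map_conj_iff (C : Subgroup G) (g : G) :
    IsCyclic (C.map (MulAut.conj g).toMonoidHom) ↔ IsCyclic C :=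
  isCyclic_map_iff _ ((MulAut.conj g).injective) C

lemma normal_map_conj (N : Subgroup G) [hN : N.Normal] (g : G) :
    N.map (MulAut.conj g).toMonoidHom = N := by
  ext x
  rw [Subgroup.mem_map_equiv]
  simp only [MulAut.conj_symm_apply]
  constructor
  · intro h
    have := hN.conj_mem _ h g
    simpa [mul_assoc] using this
  · intro h
    simpa using hN.conj_mem _ h g⁻¹

lemma isMaximalCyclicIn_map_conj {N C : Subgroup G} [N.Normal] (g : G)
    (h : IsMaximalCyclicIn N C) :
    IsMaximalCyclicIn N (C.map (MulAut.conj g).toMonoidHom) := by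
  obtain ⟨hle, hcyc, hmax⟩ := h
  refine ⟨?_, (isCyclic_map_conj_iff C g).mpr hcyc, ?_⟩
  · rw [← normal_map_conj N g]
    exact Subgroup.map_mono hle
  · intro D hDN hDcyc hCD
    have h1 : C ≤ D.map (MulAut.conj g⁻¹).toMonoidHom := by
      have := Subgroup.map_mono (f := (MulAut.conj g⁻¹).toMonoidHom) hCD
      rwa [map_conj_map_conj, inv_mul_cancel, map_conj_one] at this
    have h2 : D.map (MulAut.conj g⁻¹).toMonoidHom ≤ N := by
      rw [← normal_map_conj N g⁻¹]; exact Subgroup.map_mono hDN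
    have h3 := hmax _ h2 ((isCyclic_map_conj_iff D g⁻¹).mpr hDcyc) h1
    rw [h3, map_conj_map_conj, mul_inv_cancel, map_conj_one]

lemma exists_maximalCyclic_extension [Finite G] (C : Subgroup G) (hC : IsCyclic C) :
    ∃ M : Subgroup G, IsMaximalCyclic M ∧ C ≤ M := by
  have hfin : Set.Finite {D : Subgroup G | IsCyclic D ∧ C ≤ D} := Set.toFinite _
  obtain ⟨M, hM, hmax'⟩ := hfin.exists_maximal ⟨C, hC, le_rfl⟩
  have hmax : ∀ D ∈ {D : Subgroup G | IsCyclic D ∧ C ≤ D}, M ≤ D → M = D :=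
    fun D hD hle => le_antisymm hle (hmax' hD hle)
  exact ⟨M, ⟨hM.1, fun D hD hle => hmax D ⟨hD, hM.2.trans hle⟩ hle⟩, hM.2⟩

lemma maxcyclic_map_subtype (N : Subgroup G) (C : Subgroup ↥N) :
    IsMaximalCyclic C ↔ IsMaximalCyclicIn N (C.map N.subtype) := by
  constructor
  · rintro ⟨h1, h2⟩
    refine ⟨Subgroup.map_subtype_le C, (isCyclic_map_iff _ N.subtype_injective C).mpr h1, ?_⟩
    intro D hDN hD hle
    have hD' : IsCyclic (D.subgroupOf N) := by
      haveI := hD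
      exact isCyclic_of_surjective _ (Subgroup.subgroupOfEquivOfLe hDN).symm.surjective
    have hmap : (D.subgroupOf N).map N.subtype = D := by
      rw [Subgroup.subgroupOf_map_subtype, inf_eq_left.mpr hDN]
    have hle' : C ≤ D.subgroupOf N := by
      rw [← Subgroup.map_le_map_iff_of_injective N.subtype_injective, hmap]
      exact hle
    rw [h2 _ hD' hle', hmap]
  · rintro ⟨hle, hcyc, hmax⟩
    refine ⟨(isCyclic_map_iff _ N.subtype_injective C).mp hcyc, ?_⟩
    intro D hD hCD
    exact Subgroup.map_injective N.subtype_injective (hmax _ (Subgroup.map_subtype_le D)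
      ((isCyclic_map_iff _ N.subtype_injective D).mpr hD)
      (Subgroup.map_mono hCD))

lemma map_conj_subtype (N : Subgroup G) (n : ↥N) (C : Subgroup ↥N) :
    (C.map (MulAut.conj n).toMonoidHom).map N.subtype
      = (C.map N.subtype).map (MulAut.conj (n : G)).toMonoidHom := by
  rw [Subgroup.map_map, Subgroup.map_map]
  congr 1

end Aux

section Main

variable {G : Type*} [Group G] (N : Subgroup G)

/-- G-conjugacy on maximal cyclic in N subgroups. -/
def rgRel (C D : {C : Subgroup G // IsMaximalCyclicIn N C}) : Prop :=
  ∃ g : G, D.1 = C.1.map (MulAut.conj g).toMonoidHom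

/-- N-conjugacy on maximal cyclic in N subgroups. -/
def rnRel (C D : {C : Subgroup G // IsMaximalCyclicIn N C}) : Prop :=
  ∃ g ∈ N, D.1 = C.1.map (MulAut.conj g).toMonoidHom

lemma rgRel_equiv : Equivalence (rgRel N) := by
  constructor
  · exact fun x => ⟨1, (map_conj_one _).symm⟩
  · rintro x y ⟨g, hg⟩
    exact ⟨g⁻¹, (map_conj_inv_cancel hg).symm ▸ rfl⟩
  · rintro x y z ⟨g, hg⟩ ⟨h, hh⟩
    exact ⟨h * g, by rw [hh, hg, map_conj_map_conj]⟩

lemma eta_eq_card_rn : eta ↥N = Nat.card (Quot (rnRel N)) := by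
  apply Nat.card_congr
  refine Quot.congr ?_ ?_
  · refine
      { toFun := fun C => ⟨C.1.map N.subtype, (maxcyclic_map_subtype N C.1).mp C.2⟩
        invFun := fun D => ⟨D.1.subgroupOf N, ?_⟩
        left_inv := ?_, right_inv := ?_ }
    · have hmap : (D.1.subgroupOf N).map N.subtype = D.1 := by
        rw [Subgroup.subgroupOf_map_subtype, inf_eq_left.mpr D.2.1]
      rw [maxcyclic_map_subtype, hmap]
      exact D.2
    · intro C
      apply Subtype.ext
      apply Subgroup.map_injective N.subtype_injective
      show ((C.1.map N.subtype).subgroupOf N).map N.subtype = C.1.map N.subtype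
      rw [Subgroup.subgroupOf_map_subtype, inf_eq_left.mpr (Subgroup.map_subtype_le C.1)]
    · intro D
      apply Subtype.ext
      show (D.1.subgroupOf N).map N.subtype = D.1
      rw [Subgroup.subgroupOf_map_subtype, inf_eq_left.mpr D.2.1]
  · intro C D
    constructor
    · rintro ⟨n, hn⟩
      refine ⟨(n : G), n.2, ?_⟩
      show D.1.map N.subtype = (C.1.map N.subtype).map (MulAut.conj (n : G)).toMonoidHom
      rw [hn, map_conj_subtype]
    · rintro ⟨g, hg, heq⟩
      refine ⟨⟨g, hg⟩, ?_⟩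
      apply Subgroup.map_injective N.subtype_injective
      rw [map_conj_subtype]
      exact heq

lemma card_rn_le [Finite G] [N.Normal] :
    Nat.card (Quot (rnRel N)) ≤ N.index * Nat.card (Quot (rgRel N)) := by
  classical
  have hequiv := rgRel_equiv N
  have key : ∀ x : {C : Subgroup G // IsMaximalCyclicIn N C},
      ∃ g : G, x.1 = ((Quot.mk (rgRel N) x).out).1.map (MulAut.conj g).toMonoidHom := by
    intro x
    have h : Quot.mk (rgRel N) ((Quot.mk (rgRel N) x).out) = Quot.mk (rgRel N) x :=
      Quot.out_eq _
    exact hequiv.eqvGen_iff.mp (Quot.eq.mp h)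
  let F : Quot (rnRel N) → (G ⧸ N) × Quot (rgRel N) := fun c =>
    (QuotientGroup.mk (Classical.choose (key c.out)), Quot.mk (rgRel N) c.out)
  have hF : Function.Injective F := by
    intro c c' h
    rw [Prod.ext_iff] at h
    obtain ⟨h1, h2⟩ := h
    simp only [F] at h1 h2
    set x := c.out with hx
    set x' := c'.out with hx'
    set g := Classical.choose (key x) with hgdef
    set g' := Classical.choose (key x') with hgdef'
    have spec : x.1 = ((Quot.mk (rgRel N) x).out).1.map (MulAut.conj g).toMonoidHom :=
      Classical.choose_spec (key x)
    have spec' : x'.1 = ((Quot.mk (rgRel N) x').out).1.map (MulAut.conj g').toMonoidHom :=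
      Classical.choose_spec (key x')
    rw [← h2] at spec'
    have hn : g⁻¹ * g' ∈ N := (QuotientGroup.eq).mp h1
    have hy : ((Quot.mk (rgRel N) x).out).1 = x.1.map (MulAut.conj g⁻¹).toMonoidHom :=
      map_conj_inv_cancel spec
    have heq : x'.1 = x.1.map (MulAut.conj (g' * g⁻¹)).toMonoidHom := by
      rw [spec', hy, map_conj_map_conj]
    have hmem : g' * g⁻¹ ∈ N := by
      have : g' * g⁻¹ = g * (g⁻¹ * g') * g⁻¹ := by group
      rw [this]
      exact ‹N.Normal›.conj_mem _ hn g
    have : Quot.mk (rnRel N) x = Quot.mk (rnRel N) x' :=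
      Quot.sound ⟨g' * g⁻¹, hmem, heq⟩
    rw [← Quot.out_eq c, ← Quot.out_eq c', ← hx, ← hx']
    exact this
  haveI : Finite {C : Subgroup G // IsMaximalCyclicIn N C} := Subtype.finite
  haveI : Finite (Quot (rgRel N)) := Quot.finite _
  haveI : Finite (G ⧸ N) := Quotient.finite _
  calc Nat.card (Quot (rnRel N)) ≤ Nat.card ((G ⧸ N) × Quot (rgRel N)) :=
        Nat.card_le_card_of_injective F hF
    _ = N.index * Nat.card (Quot (rgRel N)) := by rw [Nat.card_prod]; rfl

lemma card_rg_le [Finite G] [N.Normal] :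
    Nat.card (Quot (rgRel N)) ≤ eta G := by
  classical
  by_cases hne : Nonempty {C : Subgroup G // IsMaximalCyclicIn N C}
  · have hneq : Nonempty (Quot (rgRel N)) := ⟨Quot.mk _ hne.some⟩
    set Z := Quot (fun C D : {C : Subgroup G // IsMaximalCyclic C} =>
      ∃ g : G, D.1 = C.1.map (MulAut.conj g).toMonoidHom) with hZ
    let ψ₀ : {C : Subgroup G // IsMaximalCyclic C} → Quot (rgRel N) := fun M =>
      if h : IsMaximalCyclicIn N (M.1 ⊓ N) then Quot.mk _ ⟨M.1 ⊓ N, h⟩ else hneq.some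
    have hresp : ∀ M M' : {C : Subgroup G // IsMaximalCyclic C},
        (∃ g : G, M'.1 = M.1.map (MulAut.conj g).toMonoidHom) → ψ₀ M = ψ₀ M' := by
      rintro M M' ⟨g, hg⟩
      have hinf : M'.1 ⊓ N = (M.1 ⊓ N).map (MulAut.conj g).toMonoidHom := by
        rw [Subgroup.map_inf _ _ _ (MulAut.conj g).injective, normal_map_conj N g, hg]
      have hiff : IsMaximalCyclicIn N (M'.1 ⊓ N) ↔ IsMaximalCyclicIn N (M.1 ⊓ N) := by
        constructor
        · intro h
          have := isMaximalCyclicIn_map_conj g⁻¹ h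
          rwa [hinf, map_conj_map_conj, inv_mul_cancel, map_conj_one] at this
        · intro h
          rw [hinf]
          exact isMaximalCyclicIn_map_conj g h
      by_cases h : IsMaximalCyclicIn N (M.1 ⊓ N)
      · rw [show ψ₀ M = Quot.mk _ ⟨M.1 ⊓ N, h⟩ from dif_pos h,
          show ψ₀ M' = Quot.mk _ ⟨M'.1 ⊓ N, hiff.mpr h⟩ from dif_pos (hiff.mpr h)]
        exact Quot.sound ⟨g, hinf⟩
      · rw [show ψ₀ M = hneq.some from dif_neg h,
          show ψ₀ M' = hneq.some from dif_neg (fun h' => h (hiff.mp h'))]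
    have hsurj : Function.Surjective (Quot.lift ψ₀ hresp : Z → Quot (rgRel N)) := by
      intro y
      induction y using Quot.ind with
      | _ x =>
        obtain ⟨M, hM, hle⟩ := exists_maximalCyclic_extension x.1 x.2.2.1
        haveI := hM.1
        have hMN : x.1 = M ⊓ N :=
          x.2.2.2 _ inf_le_right (Subgroup.isCyclic_of_le inf_le_left)
            (le_inf hle x.2.1)
        have hcond : IsMaximalCyclicIn N (M ⊓ N) := hMN ▸ x.2
        refine ⟨Quot.mk _ ⟨M, hM⟩, ?_⟩
        show ψ₀ ⟨M, hM⟩ = Quot.mk _ x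
        rw [show ψ₀ ⟨M, hM⟩ = Quot.mk _ ⟨M ⊓ N, hcond⟩ from dif_pos hcond]
        exact congrArg _ (Subtype.ext hMN.symm)
    haveI : Finite {C : Subgroup G // IsMaximalCyclic C} := Subtype.finite
    haveI : Finite Z := Quot.finite _
    exact Nat.card_le_card_of_surjective _ hsurj
  · have : IsEmpty (Quot (rgRel N)) := by
      constructor
      intro q
      have : ∀ q' : Quot (rgRel N), False := by
        apply Quot.ind
        intro x
        exact hne ⟨x⟩
      exact this q
    simp [Nat.card_of_isEmpty]

lemma eta_le_index_mul [Finite G] [N.Normal] : eta ↥N ≤ N.index * eta G := by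
  calc eta ↥N = Nat.card (Quot (rnRel N)) := eta_eq_card_rn N
    _ ≤ N.index * Nat.card (Quot (rgRel N)) := card_rn_le N
    _ ≤ N.index * eta G := Nat.mul_le_mul_left _ (card_rg_le N)

end Main

theorem stmt_10 {G : Type*} [Group G] [Finite G] (N : Subgroup G) [N.Normal]
    (k : ℕ) (hk : N.index = k) :
    (eta N : ℚ) / k ≤ eta G := by
  subst hk
  haveI : Finite (G ⧸ N) := Quotient.finite _
  have hk0 : (0 : ℚ) < N.index := by
    exact_mod_cast Nat.pos_of_ne_zero N.index_ne_zero_of_finite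
  rw [div_le_iff₀ hk0]
  have h := eta_le_index_mul N
  calc (eta ↥N : ℚ) ≤ (N.index : ℚ) * eta G := by exact_mod_cast h
    _ = (eta G : ℚ) * N.index := mul_comm _ _
end

section
/- Let G be a finite group and N ◁ G. Then G⁻ ⊆ N if and only if every element of G \ N has prime power order and every nontrivial element of G/N has prime order. -/
lemma isCyclic_zpowers_s13 {G : Type*} [Group G] (g : G) :
    IsCyclic (Subgroup.zpowers g) := by
  refine ⟨⟨⟨g, Subgroup.mem_zpowers g⟩, fun x => ?_⟩⟩
  obtain ⟨k, hk⟩ := x.2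
  exact ⟨k, Subtype.ext (by simpa using hk)⟩

/-- If `zpowers g` is maximal cyclic and `g ∈ zpowers h`, then `g` and `h`
have the same order. -/
lemma orderOf_eq_of_maximal {G : Type*} [Group G] [Finite G] {g h : G}
    (hmax : IsMaximalCyclic (Subgroup.zpowers g)) (hle : g ∈ Subgroup.zpowers h) :
    orderOf g = orderOf h := by
  have h1 : Subgroup.zpowers g = Subgroup.zpowers h :=
    hmax.2 (Subgroup.zpowers h) (isCyclic_zpowers_s13 h) (Subgroup.zpowers_le.mpr hle)
  rw [← Nat.card_zpowers, ← Nat.card_zpowers, h1]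

theorem stmt_13 {G : Type*} [Group G] [Finite G] (N : Subgroup G) [N.Normal] :
    Gminus G ⊆ (N : Set G) ↔
      ((∀ g : G, g ∉ N → ∃ q n : ℕ, q.Prime ∧ orderOf g = q ^ n) ∧
        ∀ x : G ⧸ N, x ≠ 1 → (orderOf x).Prime) := by
  constructor
  · intro hsub
    -- from hsub: every g ∉ N generates a maximal cyclic subgroup
    have hmax : ∀ g : G, g ∉ N → IsMaximalCyclic (Subgroup.zpowers g) := by
      intro g hg
      by_contra hc
      exact hg (hsub hc)
    -- Claim 1: prime power orders outside N
    have claim1 : ∀ g : G, g ∉ N → ∃ q n : ℕ, q.Prime ∧ orderOf g = q ^ n := by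
      intro g hg
      obtain ⟨k, hk⟩ : ∃ k, orderOf g = k := ⟨_, rfl⟩
      have hk0 : k ≠ 0 := hk ▸ (orderOf_pos g).ne'
      have hk1 : k ≠ 1 := by
        intro h1
        subst h1
        exact hg (orderOf_eq_one_iff.mp hk ▸ N.one_mem)
      obtain ⟨p, hp⟩ : ∃ p, k.minFac = p := ⟨_, rfl⟩
      have hpp : p.Prime := hp ▸ Nat.minFac_prime hk1
      obtain ⟨m, hmdef⟩ : ∃ m, p ^ k.factorization p = m := ⟨_, rfl⟩
      obtain ⟨n, hndef⟩ : ∃ n, k / m = n := ⟨_, rfl⟩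
      have hmn : m * n = k := by
        rw [← hndef, ← hmdef]
        exact Nat.ordProj_mul_ordCompl_eq_self k p
      have hcop : Nat.Coprime m n := by
        rw [← hndef, ← hmdef]
        exact Nat.Coprime.pow_left _ (Nat.coprime_ordCompl hpp hk0)
      by_cases hn1 : n = 1
      · refine ⟨p, k.factorization p, hpp, ?_⟩
        rw [hmdef, hk, ← hmn, hn1, mul_one]
      · exfalso
        have hn0 : n ≠ 0 := by
          intro h0; rw [h0, mul_zero] at hmn; exact hk0 hmn.symm
        have hm1 : 1 < m := by
          rw [← hmdef]
          exact Nat.one_lt_pow (Nat.Prime.factorization_pos_of_dvd hpp hk0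
            (hp ▸ Nat.minFac_dvd k)).ne' hpp.one_lt
        have hn1' : 1 < n := by omega
        -- Bezout over ℤ
        have hic : IsCoprime (m : ℤ) (n : ℤ) := Int.isCoprime_iff_gcd_eq_one.mpr
          (by simpa [Int.gcd_natCast_natCast] using hcop)
        obtain ⟨u, v, huv⟩ := hic
        have hgdecomp : (g ^ m) ^ u * (g ^ n) ^ v = g := by
          have h1' : (m : ℤ) * u + (n : ℤ) * v = 1 := by linarith
          calc (g ^ m) ^ u * (g ^ n) ^ v
              = g ^ ((m : ℤ) * u) * g ^ ((n : ℤ) * v) := by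
                rw [← zpow_natCast g m, ← zpow_natCast g n, ← zpow_mul, ← zpow_mul]
            _ = g ^ ((m : ℤ) * u + (n : ℤ) * v) := (zpow_add g _ _).symm
            _ = g := by rw [h1', zpow_one]
        -- one of g^m, g^n not in N
        have key : ∀ a : ℕ, 1 < a → a ∣ k → g ^ a ∈ N := by
          intro a ha hak
          by_contra hgaN
          have := orderOf_eq_of_maximal (hmax _ hgaN)
            ((Subgroup.zpowers g).pow_mem (Subgroup.mem_zpowers g) a)
          rw [orderOf_pow g, hk, Nat.gcd_eq_right hak] at this
          obtain ⟨c, hc⟩ := hak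
          rw [hc, Nat.mul_div_cancel_left _ (lt_trans one_pos ha)] at this
          have hcpos : 0 < c := by
            rcases Nat.eq_zero_or_pos c with h0 | h
            · rw [h0, mul_zero] at hc; exact absurd hc hk0
            · exact h
          nlinarith
        have h1 : g ^ m ∈ N := key m hm1 ⟨n, hmn.symm⟩
        have h2 : g ^ n ∈ N := key n hn1' ⟨m, by rw [mul_comm]; exact hmn.symm⟩
        exact hg (hgdecomp ▸ N.mul_mem (N.zpow_mem h1 u) (N.zpow_mem h2 v))
    refine ⟨claim1, ?_⟩
    -- Claim 2: prime orders in quotient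
    intro x hx
    obtain ⟨g, rfl⟩ := QuotientGroup.mk_surjective x
    have hgN : g ∉ N := fun h => hx ((QuotientGroup.eq_one_iff g).mpr h)
    obtain ⟨q, n, hq, hord⟩ := claim1 g hgN
    have hdvd : orderOf ((g : G ⧸ N)) ∣ orderOf g :=
      orderOf_map_dvd (QuotientGroup.mk' N) g
    rw [hord] at hdvd
    obtain ⟨k, hkn, hkeq⟩ := (Nat.dvd_prime_pow hq).mp hdvd
    have hk1 : 1 ≤ k := by
      rcases Nat.eq_zero_or_pos k with h0 | h; swap; · exact h
      rw [h0, pow_zero] at hkeq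
      exact absurd (orderOf_eq_one_iff.mp hkeq) hx
    -- show k = 1
    have hk : k = 1 := by
      by_contra hne
      have hk2 : 2 ≤ k := lt_of_le_of_ne hk1 (Ne.symm hne)
      -- g^q ∉ N
      have hgq : g ^ q ∉ N := by
        intro hmem
        have : ((g : G ⧸ N)) ^ q = 1 := by
          rw [← QuotientGroup.mk_pow]
          exact (QuotientGroup.eq_one_iff _).mpr hmem
        have := orderOf_dvd_of_pow_eq_one this
        rw [hkeq] at this
        have : q ^ k ≤ q ^ 1 := Nat.le_of_dvd (pow_pos hq.pos 1) (by simpa using this)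
        exact absurd ((Nat.pow_le_pow_iff_right hq.one_lt).mp this) (by omega)
      have heq := orderOf_eq_of_maximal (hmax _ hgq)
        ((Subgroup.zpowers g).pow_mem (Subgroup.mem_zpowers g) q)
      rw [orderOf_pow g, hord] at heq
      have hqd : q ∣ q ^ n := dvd_pow_self q (by
        -- n ≥ k ≥ 2 > 0
        intro h0
        rw [h0, pow_zero, Nat.dvd_one] at hdvd
        rw [hkeq] at hdvd
        have := hq.one_lt
        have : q ^ k ≥ q := Nat.le_self_pow (by omega) q
        omega)
      rw [Nat.gcd_eq_right hqd] at heq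
      obtain ⟨c, hc⟩ := hqd
      rw [hc, Nat.mul_div_cancel_left _ hq.pos] at heq
      have hcpos : 0 < c := by
        rcases Nat.eq_zero_or_pos c with h0 | h; swap; · exact h
        rw [h0, mul_zero] at hc
        exact absurd hc (pow_ne_zero n hq.pos.ne')
      nlinarith [hq.one_lt]
    rw [hkeq, hk, pow_one]
    exact hq
  · -- backward direction
    rintro ⟨h1, h2⟩ g hg
    by_contra hgN
    apply hg
    constructor
    · exact isCyclic_zpowers_s13 g
    intro D hD hle
    -- D = zpowers h for some h
    obtain ⟨⟨h, hhD⟩, hgen⟩ := hD.exists_generator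
    have hDeq : D = Subgroup.zpowers h := by
      apply le_antisymm
      · intro x hx
        obtain ⟨k, hk⟩ := hgen ⟨x, hx⟩
        refine ⟨k, ?_⟩
        have := congrArg (Subtype.val) hk
        simpa using this
      · exact Subgroup.zpowers_le.mpr hhD
    have hgh : g ∈ Subgroup.zpowers h := hDeq ▸ hle (Subgroup.mem_zpowers g)
    obtain ⟨m, hm⟩ := mem_powers_iff_mem_zpowers.mpr hgh
    have hhN : h ∉ N := by
      intro hmem
      exact hgN (hm ▸ N.pow_mem hmem m)
    obtain ⟨q, n, hq, hord⟩ := h1 h hhN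
    -- order of h in quotient is q
    have hhq1 : ((h : G ⧸ N)) ≠ 1 := fun he => hhN ((QuotientGroup.eq_one_iff h).mp he)
    have hqord : (orderOf ((h : G ⧸ N))).Prime := h2 _ hhq1
    have hdvd : orderOf ((h : G ⧸ N)) ∣ q ^ n := hord ▸ orderOf_map_dvd (QuotientGroup.mk' N) h
    have hqeq : orderOf ((h : G ⧸ N)) = q := by
      obtain ⟨k, hkn, hkeq⟩ := (Nat.dvd_prime_pow hq).mp hdvd
      rcases Nat.eq_zero_or_pos k with h0 | hpos
      · rw [h0, pow_zero] at hkeq; exact absurd hkeq hqord.ne_one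
      · rw [hkeq]
        rcases Nat.lt_or_ge 1 k with hk2 | hk1
        · exfalso
          have := Nat.Prime.eq_one_of_pow (hkeq ▸ hqord)
          omega
        · interval_cases k; simp
    -- q does not divide m
    have hqm : ¬ q ∣ m := by
      intro hdvd'
      apply hgN
      have : ((g : G ⧸ N)) = 1 := by
        rw [← hm, QuotientGroup.mk_pow]
        obtain ⟨c, rfl⟩ := hdvd'
        rw [pow_mul, ← hqeq, pow_orderOf_eq_one, one_pow]
      exact (QuotientGroup.eq_one_iff g).mp this
    -- hence orderOf g = orderOf h
    have hcop : Nat.Coprime (orderOf h) m := by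
      rw [hord]
      exact Nat.Coprime.pow_left _ (hq.coprime_iff_not_dvd.mpr hqm)
    have hordg : orderOf g = orderOf h := by
      rw [← hm, Nat.Coprime.orderOf_pow hcop]
    rw [hDeq]
    apply Subgroup.eq_of_le_of_card_ge (Subgroup.zpowers_le.mpr hgh)
    rw [Nat.card_zpowers, Nat.card_zpowers, hordg]
end
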